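/- Let G be a k-regular graph with at least one edge, adjacency matrix A, smallest adjacency eigenvalue −τ (τ > 0), and independence number α(G). Then α(G) ≤ n·τ/(k+τ), where n is the number of vertices. -/

import Mathlib

open Matrix SimpleGraph Pointwise

noncomputable def minEigR {n : ℕ} (A : Matrix (Fin n) (Fin n) ℝ) : ℝ :=
  sInf (spectrum ℝ A)

/-- Hoffman's ratio bound: for a `k`-regular graph with an edge and smallest
adjacency eigenvalue `−τ` (`τ > 0`), every independent set has size at most
`n·τ/(k+τ)`. -/
theorem stmt11 {n k : ℕ} (G : SimpleGraph (Fin n)) [DecidableRel G.Adj]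
    (hreg : G.IsRegularOfDegree k) (hedge : ∃ u v, G.Adj u v)
    (τ : ℝ) (hτ : minEigR (G.adjMatrix ℝ) = -τ) (hτpos : 0 < τ) :
    ∀ s : Finset (Fin n), (∀ u ∈ s, ∀ v ∈ s, ¬ G.Adj u v) →
      (s.card : ℝ) ≤ (n : ℝ) * τ / ((k : ℝ) + τ) := by
  intro s hs
  obtain ⟨u0, v0, huv⟩ := hedge
  have hn : 0 < n := Fin.pos u0
  set A : Matrix (Fin n) (Fin n) ℝ := G.adjMatrix ℝ with hA
  set B : Matrix (Fin n) (Fin n) ℝ := A + (algebraMap ℝ (Matrix (Fin n) (Fin n) ℝ)) τ with hBdef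
  have hAh : A.IsHermitian := by
    show Aᴴ = A
    rw [conjTranspose_eq_transpose_of_trivial]
    exact G.isSymm_adjMatrix
  have hBh : B.IsHermitian := by
    refine hAh.add ?_
    simp [Matrix.algebraMap_eq_diagonal, Matrix.isHermitian_diagonal_iff]
  have hspec : ∀ μ ∈ spectrum ℝ A, -τ ≤ μ := by
    intro μ hμ
    rw [← hτ]
    exact csInf_le (A.finite_spectrum.bddBelow) hμ
  have hBpsd : B.PosSemidef := by
    apply hBh.posSemidef_iff_eigenvalues_nonneg.mpr; show ∀ i, (0 : ℝ) ≤ hBh.eigenvalues i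
    intro i
    have hmem : hBh.eigenvalues i ∈ spectrum ℝ A + ({τ} : Set ℝ) := by
      rw [spectrum.add_singleton_eq]
      exact hBh.eigenvalues_mem_spectrum_real i
    obtain ⟨μ, hμ, r, hr, hsum⟩ := Set.mem_add.1 hmem
    rw [Set.mem_singleton_iff] at hr
    have h1 := hspec μ hμ
    rw [← hsum, hr]
    linarith
  set x : Fin n → ℝ := fun i => if i ∈ s then 1 else 0 with hx
  set j : Fin n → ℝ := fun _ => 1 with hj
  set y : Fin n → ℝ := (n : ℝ) • x - (s.card : ℝ) • j with hy
  have hAj : A *ᵥ j = fun _ => (k : ℝ) := by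
    funext i
    rw [hA, SimpleGraph.adjMatrix_mulVec_apply]
    simp [hj, hreg i]
  have hxx : x ⬝ᵥ x = (s.card : ℝ) := by
    simp [dotProduct, hx, ite_and, Finset.sum_ite_mem]
  have hxj : x ⬝ᵥ j = (s.card : ℝ) := by
    simp [dotProduct, hx, hj, Finset.sum_ite_mem]
  have hjx : j ⬝ᵥ x = (s.card : ℝ) := by
    simp [dotProduct, hx, hj, Finset.sum_ite_mem]
  have hjj : j ⬝ᵥ j = (n : ℝ) := by simp [dotProduct, hj]
  have hxAx : x ⬝ᵥ (A *ᵥ x) = 0 := by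
    rw [dotProduct]
    refine Finset.sum_eq_zero fun i _ => ?_
    rw [hA, SimpleGraph.adjMatrix_mulVec_apply]
    rcases eq_or_ne (x i) 0 with h0 | h0
    · rw [h0, zero_mul]
    · have his : i ∈ s := by by_contra hc; simp [hx, hc] at h0
      have hz : ∑ w ∈ G.neighborFinset i, x w = 0 := by
        refine Finset.sum_eq_zero fun w hw => ?_
        have hiw : G.Adj i w := (G.mem_neighborFinset i w).1 hw
        have hws : w ∉ s := fun hws => hs i his w hws hiw
        simp [hx, hws]
      rw [hz, mul_zero]
  have hxAj : x ⬝ᵥ (A *ᵥ j) = (k : ℝ) * s.card := by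
    rw [hAj]
    simp [dotProduct, hx, Finset.sum_ite_mem, mul_comm]
  have hjAx : j ⬝ᵥ (A *ᵥ x) = (k : ℝ) * s.card := by
    have hsym : j ⬝ᵥ (A *ᵥ x) = (Aᵀ *ᵥ j) ⬝ᵥ x := by
      rw [Matrix.dotProduct_mulVec, Matrix.mulVec_transpose]
    rw [hsym, G.isSymm_adjMatrix.eq, hAj]
    simp [dotProduct, hx, Finset.sum_ite_mem, mul_comm]
  have hjAj : j ⬝ᵥ (A *ᵥ j) = (k : ℝ) * n := by
    rw [hAj]
    simp [dotProduct, hj, mul_comm]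
  have hBv : ∀ v : Fin n → ℝ, B *ᵥ v = A *ᵥ v + τ • v := by
    intro v
    rw [hBdef, Matrix.add_mulVec]
    congr 1
    funext i
    simp [Matrix.algebraMap_eq_diagonal, Matrix.mulVec, dotProduct,
      Matrix.diagonal_apply, ite_mul, Finset.sum_ite_eq]
  have key : (0 : ℝ) ≤ y ⬝ᵥ (B *ᵥ y) := by
    simpa using hBpsd.dotProduct_mulVec_nonneg y
  have hexp : y ⬝ᵥ (B *ᵥ y) =
      (n : ℝ)^2 * (τ * s.card) - (n : ℝ) * (s.card : ℝ)^2 * ((k : ℝ) + τ) := by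
    simp only [hy, Matrix.mulVec_sub, Matrix.mulVec_smul, hBv,
      sub_dotProduct, smul_dotProduct, dotProduct_sub,
      dotProduct_smul, dotProduct_add,
      hxAx, hxAj, hjAx, hjAj, hxx, hxj, hjx, hjj, smul_eq_mul]
    ring
  rw [hexp] at key
  have hkτ : (0 : ℝ) < (k : ℝ) + τ := by positivity
  have hc : (0 : ℝ) ≤ (s.card : ℝ) := by positivity
  rcases eq_or_lt_of_le hc with hc0 | hcpos
  · rw [← hc0]
    positivity
  · rw [le_div_iff₀ hkτ]
    have hnpos : (0 : ℝ) < n := by exact_mod_cast hn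
    nlinarith [key, mul_pos hnpos hcpos]
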